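/- Let φ be a C³ circle diffeomorphism, n a positive integer, and define the n-fold cover φₙ(z) = (φ(z))ⁿ on S¹. Then the Schwarzian derivatives satisfy S[φₙ](z) = ((1 − n²)/(2φ(z)²))·(φ'(z))² + S[φ](z), and consequently the n-th Schwarzian action satisfies I_Sch(φₙ) = I_Sch(φ) + ((1 − n²)/2)·∫₀^{2π} |φ'(e^{iθ})|² dθ, where I_Sch(ψ) = ∫₀^{2π} e^{2iθ} S[ψ](e^{iθ}) dθ. -/

import Mathlib

open Complex intervalIntegral

/-- The Schwarzian derivative `S[f] = (f''/f')' - (1/2)(f''/f')²`. -/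
noncomputable def schwarzian (f : ℂ → ℂ) (z : ℂ) : ℂ :=
  deriv (fun w => deriv (deriv f) w / deriv f w) z
    - (deriv (deriv f) z / deriv f z) ^ 2 / 2

open Filter Topology

private lemma analyticAt_deriv {f : ℂ → ℂ} {x : ℂ} (h : AnalyticAt ℂ f x) :
    AnalyticAt ℂ (deriv f) x :=
  (AnalyticOnNhd.deriv (fun _ hy => hy : AnalyticOnNhd ℂ f {y | AnalyticAt ℂ f y})) x h

private lemma schwarzian_pow {φ : ℂ → ℂ} {z : ℂ} (k : ℕ)
    (hA : AnalyticAt ℂ φ z) (hP : φ z ≠ 0) (ha : deriv φ z ≠ 0) :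
    schwarzian (fun w => (φ w) ^ (k + 1)) z
      = ((1 - ((k : ℂ) + 1) ^ 2) / (2 * (φ z) ^ 2)) * (deriv φ z) ^ 2 + schwarzian φ z := by
  have hEA : ∀ᶠ w in 𝓝 z, AnalyticAt ℂ φ w := hA.eventually_analyticAt
  have hEa : ∀ᶠ w in 𝓝 z, deriv φ w ≠ 0 := (analyticAt_deriv hA).continuousAt.eventually_ne ha
  have hEP : ∀ᶠ w in 𝓝 z, φ w ≠ 0 := hA.continuousAt.eventually_ne hP
  have hk1 : ((k : ℂ) + 1) ≠ 0 := by exact_mod_cast Nat.succ_ne_zero k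
  have hratio : (fun w => deriv (deriv (fun v => φ v ^ (k + 1))) w
        / deriv (fun v => φ v ^ (k + 1)) w)
      =ᶠ[𝓝 z] fun w => (k : ℂ) * (deriv φ w / φ w) + deriv (deriv φ) w / deriv φ w := by
    filter_upwards [hEA.eventually_nhds, hEa, hEP] with w hw haw hpw
    have hAw : AnalyticAt ℂ φ w := hw.self_of_nhds
    have e1 : deriv (fun v => φ v ^ (k + 1)) =ᶠ[𝓝 w]
        fun v => ((k : ℂ) + 1) * (φ v ^ k * deriv φ v) := by
      filter_upwards [hw] with v hv
      rw [deriv_fun_pow hv.differentiableAt]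
      push_cast [Nat.add_sub_cancel]
      ring
    have e2 : deriv (deriv (fun v => φ v ^ (k + 1))) w
        = ((k : ℂ) + 1) * (((k : ℂ) * φ w ^ (k - 1) * deriv φ w) * deriv φ w
            + φ w ^ k * deriv (deriv φ) w) := by
      rw [e1.deriv_eq,
        deriv_const_mul _
          ((hAw.differentiableAt.fun_pow k).fun_mul (analyticAt_deriv hAw).differentiableAt),
        deriv_fun_mul (hAw.differentiableAt.fun_pow k) (analyticAt_deriv hAw).differentiableAt,
        deriv_fun_pow hAw.differentiableAt]
    have e3 : deriv (fun v => φ v ^ (k + 1)) w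
        = ((k : ℂ) + 1) * (φ w ^ k * deriv φ w) := e1.self_of_nhds
    rw [e2, e3, mul_div_mul_left _ _ hk1]
    rcases k with _ | j
    · simp
    · have hj : (j : ℂ) + 1 ≠ 0 := by exact_mod_cast Nat.succ_ne_zero j
      push_cast [Nat.add_sub_cancel]
      field_simp [pow_succ]
      ring
  have haA := analyticAt_deriv hA
  have hb := analyticAt_deriv haA
  have hd1 : HasDerivAt (fun w => deriv φ w / φ w)
      ((deriv (deriv φ) z * φ z - deriv φ z * deriv φ z) / φ z ^ 2) z :=
    (haA.differentiableAt.hasDerivAt).div (hA.differentiableAt.hasDerivAt) hP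
  have hdiffba : DifferentiableAt ℂ (fun w => deriv (deriv φ) w / deriv φ w) z :=
    (hb.div haA ha).differentiableAt
  have hDsum : deriv (fun w => (k : ℂ) * (deriv φ w / φ w) + deriv (deriv φ) w / deriv φ w) z
      = (k : ℂ) * ((deriv (deriv φ) z * φ z - deriv φ z * deriv φ z) / φ z ^ 2)
        + deriv (fun w => deriv (deriv φ) w / deriv φ w) z := by
    rw [deriv_fun_add ((hd1.differentiableAt).const_mul _) hdiffba,
      deriv_const_mul _ hd1.differentiableAt, hd1.deriv]
  have hval : deriv (deriv (fun w => φ w ^ (k + 1))) z / deriv (fun w => φ w ^ (k + 1)) z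
      = (k : ℂ) * (deriv φ z / φ z) + deriv (deriv φ) z / deriv φ z := hratio.eq_of_nhds
  unfold schwarzian
  rw [hratio.deriv_eq, hDsum, hval]
  field_simp
  ring

private lemma key_sq (φ : ℂ → ℂ)
    (hφ : ∀ w : ℂ, ‖w‖ = 1 → AnalyticAt ℂ φ w)
    (hmap : ∀ w : ℂ, ‖w‖ = 1 → ‖φ w‖ = 1) (θ : ℝ) :
    (Complex.exp (θ * I)) ^ 2 * (deriv φ (Complex.exp (θ * I))) ^ 2
      = (((‖deriv φ (Complex.exp (θ * I))‖) ^ 2 : ℝ) : ℂ)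
          * (φ (Complex.exp (θ * I))) ^ 2 := by
  set z := Complex.exp (θ * I) with hzdef
  have hz : ‖z‖ = 1 := by simp [hzdef, Complex.norm_exp]
  set A := deriv φ z with hA
  set P := φ z with hPdef
  have hP1 : ‖P‖ = 1 := hmap z hz
  have hPconj : P * (starRingEnd ℂ) P = 1 := by
    rw [Complex.mul_conj]; norm_cast; rw [Complex.normSq_eq_norm_sq, hP1]; norm_num
  have hzconj : z * (starRingEnd ℂ) z = 1 := by
    rw [Complex.mul_conj]; norm_cast; rw [Complex.normSq_eq_norm_sq, hz]; norm_num
  have h1 : HasDerivAt (fun t : ℝ => Complex.exp (t * I)) (z * I) θ := by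
    simpa [hzdef] using ((Complex.ofRealCLM.hasDerivAt (x := θ)).mul_const I).cexp
  have h2 : HasDerivAt (fun t : ℝ => φ (Complex.exp (t * I))) (A * (z * I)) θ :=
    ((hφ z hz).differentiableAt.hasDerivAt).comp θ h1
  have h3 : HasDerivAt
      (fun t : ℝ => φ (Complex.exp (t * I)) * (starRingEnd ℂ) (φ (Complex.exp (t * I))))
      (A * (z * I) * (starRingEnd ℂ) P + P * (starRingEnd ℂ) (A * (z * I))) θ := by
    simpa [Complex.star_def] using h2.fun_mul h2.star
  have hNconst : (fun t : ℝ => φ (Complex.exp (t * I)) * (starRingEnd ℂ) (φ (Complex.exp (t * I))))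
      = fun _ => (1 : ℂ) := by
    funext t
    have ht : ‖Complex.exp (t * I)‖ = 1 := by simp [Complex.norm_exp]
    rw [Complex.mul_conj]; norm_cast; rw [Complex.normSq_eq_norm_sq, hmap _ ht]; norm_num
  rw [hNconst] at h3
  have hE0 : A * (z * I) * (starRingEnd ℂ) P + P * (starRingEnd ℂ) (A * (z * I)) = 0 :=
    h3.unique (hasDerivAt_const θ 1)
  rw [map_mul, map_mul, Complex.conj_I] at hE0
  have huc : z * A * (starRingEnd ℂ) P = (starRingEnd ℂ) z * (starRingEnd ℂ) A * P := by
    linear_combination (-I) * hE0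
      + (z * A * (starRingEnd ℂ) P - (starRingEnd ℂ) z * (starRingEnd ℂ) A * P) * Complex.I_sq
  have hA2 : A * (starRingEnd ℂ) A = ((‖A‖) ^ 2 : ℝ) := by
    rw [Complex.mul_conj]; norm_cast; exact Complex.normSq_eq_norm_sq A
  have hu2 : (z * A * (starRingEnd ℂ) P) ^ 2 = (((‖A‖) ^ 2 : ℝ) : ℂ) := by
    calc (z * A * (starRingEnd ℂ) P) ^ 2
        = (z * A * (starRingEnd ℂ) P) * ((starRingEnd ℂ) z * (starRingEnd ℂ) A * P) := by
          rw [sq]; nth_rewrite 2 [huc]; rfl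
      _ = (z * (starRingEnd ℂ) z) * (A * (starRingEnd ℂ) A) * (P * (starRingEnd ℂ) P) := by ring
      _ = (((‖A‖) ^ 2 : ℝ) : ℂ) := by rw [hzconj, hA2, hPconj]; ring
  linear_combination P ^ 2 * hu2 - z ^ 2 * A ^ 2 * (1 + P * (starRingEnd ℂ) P) * hPconj

private lemma schwarzian_contAt {φ : ℂ → ℂ} {z : ℂ}
    (hA : AnalyticAt ℂ φ z) (ha : deriv φ z ≠ 0) :
    ContinuousAt (schwarzian φ) z := by
  have hba : AnalyticAt ℂ (fun w => deriv (deriv φ) w / deriv φ w) z :=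
    ((analyticAt_deriv (analyticAt_deriv hA)).div (analyticAt_deriv hA) ha)
  have h1 : ContinuousAt (fun y => deriv (fun w => deriv (deriv φ) w / deriv φ w) y) z :=
    (analyticAt_deriv hba).continuousAt
  exact h1.sub ((hba.continuousAt.pow 2).div_const 2)

/-- For a circle diffeomorphism `φ` (holomorphic near the circle, mapping the unit circle
to itself with nonvanishing derivative) and its `n`-fold cover `φₙ(z) = (φ z)ⁿ`:
`S[φₙ] = ((1−n²)/(2φ²))(φ')² + S[φ]` on the circle, and hence
`I_Sch(φₙ) = I_Sch(φ) + ((1−n²)/2)·∫₀^{2π}|φ'(e^{iθ})|² dθ`. -/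
theorem schwarzian_n_fold_cover (φ : ℂ → ℂ) (n : ℕ) (hn : 0 < n)
    (hφ : ∀ w : ℂ, ‖w‖ = 1 → AnalyticAt ℂ φ w)
    (hmap : ∀ w : ℂ, ‖w‖ = 1 → ‖φ w‖ = 1)
    (hd : ∀ w : ℂ, ‖w‖ = 1 → deriv φ w ≠ 0) :
    (∀ z : ℂ, ‖z‖ = 1 →
        schwarzian (fun w => (φ w) ^ n) z
          = ((1 - (n : ℂ) ^ 2) / (2 * (φ z) ^ 2)) * (deriv φ z) ^ 2 + schwarzian φ z)
    ∧ (∫ θ in (0:ℝ)..(2 * Real.pi),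
          Complex.exp (2 * θ * I) * schwarzian (fun w => (φ w) ^ n) (Complex.exp (θ * I)))
        = (∫ θ in (0:ℝ)..(2 * Real.pi),
            Complex.exp (2 * θ * I) * schwarzian φ (Complex.exp (θ * I)))
          + ((1 - (n : ℂ) ^ 2) / 2)
            * ((∫ θ in (0:ℝ)..(2 * Real.pi),
                ‖deriv φ (Complex.exp (θ * I))‖ ^ 2 : ℝ) : ℂ) := by
  obtain ⟨k, rfl⟩ : ∃ k, n = k + 1 := ⟨n - 1, (Nat.succ_pred_eq_of_pos hn).symm⟩
  have part1 : ∀ z : ℂ, ‖z‖ = 1 →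
      schwarzian (fun w => (φ w) ^ (k + 1)) z
        = ((1 - ((k + 1 : ℕ) : ℂ) ^ 2) / (2 * (φ z) ^ 2)) * (deriv φ z) ^ 2 + schwarzian φ z := by
    intro z hz
    have hP : φ z ≠ 0 := by
      intro h0
      have := hmap z hz
      rw [h0] at this
      simp at this
    have := schwarzian_pow k (hφ z hz) hP (hd z hz)
    push_cast at this ⊢
    exact this
  refine ⟨part1, ?_⟩
  -- pointwise integrand identity
  have hpt : ∀ θ : ℝ,
      Complex.exp (2 * θ * I) * schwarzian (fun w => (φ w) ^ (k + 1)) (Complex.exp (θ * I))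
        = Complex.exp (2 * θ * I) * schwarzian φ (Complex.exp (θ * I))
          + ((1 - ((k + 1 : ℕ) : ℂ) ^ 2) / 2)
            * (((‖deriv φ (Complex.exp (θ * I))‖) ^ 2 : ℝ) : ℂ) := by
    intro θ
    set z := Complex.exp (θ * I) with hzdef
    have hz : ‖z‖ = 1 := by simp [hzdef, Complex.norm_exp]
    have hP : φ z ≠ 0 := by
      intro h0
      have := hmap z hz
      rw [h0] at this
      simp at this
    have hz2 : Complex.exp (2 * θ * I) = z ^ 2 := by
      rw [hzdef, show (2 : ℂ) * θ * I = (2 : ℕ) * (θ * I) by push_cast; ring,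
        Complex.exp_nat_mul]
    have hkey := key_sq φ hφ hmap θ
    rw [part1 z hz, mul_add, hz2]
    have hmain : z ^ 2 * (((1 - ((k + 1 : ℕ) : ℂ) ^ 2) / (2 * (φ z) ^ 2)) * (deriv φ z) ^ 2)
        = ((1 - ((k + 1 : ℕ) : ℂ) ^ 2) / 2)
            * (((‖deriv φ z‖) ^ 2 : ℝ) : ℂ) := by
      have h2 : z ^ 2 * (deriv φ z) ^ 2
          = (((‖deriv φ z‖) ^ 2 : ℝ) : ℂ) * (φ z) ^ 2 := by
        rw [hzdef] at *; exact hkey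
      push_cast at h2 ⊢
      field_simp
      linear_combination (1 - ((k : ℂ) + 1) ^ 2) * h2
    rw [hmain]
    ring
  -- continuity / integrability
  have hce : Continuous (fun θ : ℝ => Complex.exp (θ * I)) :=
    Complex.continuous_exp.comp (Complex.continuous_ofReal.mul continuous_const)
  have hce2 : Continuous (fun θ : ℝ => Complex.exp (2 * θ * I)) := by
    apply Complex.continuous_exp.comp
    exact (continuous_const.mul Complex.continuous_ofReal).mul continuous_const
  have habs : ∀ θ : ℝ, ‖Complex.exp (θ * I)‖ = 1 := fun θ => by
    simp [Complex.norm_exp]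
  have hScont : Continuous (fun θ : ℝ => schwarzian φ (Complex.exp (θ * I))) := by
    rw [continuous_iff_continuousAt]
    intro θ
    have h := ContinuousAt.comp (x := θ)
      (schwarzian_contAt (hφ (Complex.exp (θ * I)) (habs θ)) (hd (Complex.exp (θ * I)) (habs θ)))
      hce.continuousAt
    simpa [Function.comp_def] using h
  have hgcont : Continuous
      (fun θ : ℝ => ((‖deriv φ (Complex.exp (θ * I))‖) ^ 2 : ℝ)) := by
    rw [continuous_iff_continuousAt]
    intro θ
    have h1 := ContinuousAt.comp (x := θ)
      (analyticAt_deriv (hφ (Complex.exp (θ * I)) (habs θ))).continuousAt hce.continuousAt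
    have h2 := ContinuousAt.comp (x := θ) continuous_norm.continuousAt h1
    have h3 := h2.pow 2
    exact h3
  have hf_int : IntervalIntegrable
      (fun θ : ℝ => Complex.exp (2 * θ * I) * schwarzian φ (Complex.exp (θ * I)))
      MeasureTheory.volume 0 (2 * Real.pi) :=
    (hce2.mul hScont).intervalIntegrable _ _
  have hg_int : IntervalIntegrable
      (fun θ : ℝ => ((1 - ((k + 1 : ℕ) : ℂ) ^ 2) / 2)
        * (((‖deriv φ (Complex.exp (θ * I))‖) ^ 2 : ℝ) : ℂ))
      MeasureTheory.volume 0 (2 * Real.pi) :=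
    (continuous_const.mul (Complex.continuous_ofReal.comp hgcont)).intervalIntegrable _ _
  calc (∫ θ in (0:ℝ)..(2 * Real.pi),
        Complex.exp (2 * θ * I) * schwarzian (fun w => (φ w) ^ (k + 1)) (Complex.exp (θ * I)))
      = ∫ θ in (0:ℝ)..(2 * Real.pi),
          (Complex.exp (2 * θ * I) * schwarzian φ (Complex.exp (θ * I))
            + ((1 - ((k + 1 : ℕ) : ℂ) ^ 2) / 2)
              * (((‖deriv φ (Complex.exp (θ * I))‖) ^ 2 : ℝ) : ℂ)) := by
        apply intervalIntegral.integral_congr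
        intro θ _
        exact hpt θ
    _ = (∫ θ in (0:ℝ)..(2 * Real.pi),
          Complex.exp (2 * θ * I) * schwarzian φ (Complex.exp (θ * I)))
        + ∫ θ in (0:ℝ)..(2 * Real.pi),
            ((1 - ((k + 1 : ℕ) : ℂ) ^ 2) / 2)
              * (((‖deriv φ (Complex.exp (θ * I))‖) ^ 2 : ℝ) : ℂ) :=
        intervalIntegral.integral_add hf_int hg_int
    _ = (∫ θ in (0:ℝ)..(2 * Real.pi),
          Complex.exp (2 * θ * I) * schwarzian φ (Complex.exp (θ * I)))
        + ((1 - ((k + 1 : ℕ) : ℂ) ^ 2) / 2)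
          * ((∫ θ in (0:ℝ)..(2 * Real.pi),
              (‖deriv φ (Complex.exp (θ * I))‖) ^ 2 : ℝ) : ℂ) := by
        rw [intervalIntegral.integral_const_mul, intervalIntegral.integral_ofReal]
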